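/- arXiv:2303.11986 — 2 statements merged into one kernel-verified Lean document; each statement's English description precedes it below -/
import Mathlib

section
/- Every regainingly approximable real number is speedable. In particular, if (x_n) is a computable non-decreasing sequence of rationals converging to x with x - x_n < 2^{-n} for infinitely many n, then the sequence y_n := x_n - 2^{-n} is computable, strictly increasing, converges to x, and satisfies (y_{n+1} - y_n)/(x - y_n) > 1/4 for infinitely many n. -/
open Filter Encodable Denumerable

namespace RegSpeed

def gstep : ℕ × ℕ → ℕ × ℕ := fun p => if p.1 = 0 then p else (p.2 % p.1, p.1)

theorem gstep_iter : ∀ (k a b : ℕ), a ≤ k → (gstep^[k] (a, b)).2 = Nat.gcd a b := by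
  intro k
  induction k with
  | zero => intro a b h; interval_cases a; simp
  | succ k ih =>
    intro a b h
    rw [Function.iterate_succ_apply]
    by_cases ha : a = 0
    · subst ha
      have : gstep (0, b) = (0, b) := by simp [gstep]
      rw [this, ih 0 b (Nat.zero_le _)]
    · have h1 : gstep (a, b) = (b % a, a) := by simp [gstep, ha]
      have h2 : b % a < a := Nat.mod_lt b (by omega)
      rw [h1, ih _ _ (by omega)]
      exact (Nat.gcd_rec a b).symm

theorem primrec_gstep : Primrec gstep :=
  Primrec.ite (Primrec.eq.comp Primrec.fst (Primrec.const 0)) Primrec.id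
    (Primrec.pair (Primrec.nat_mod.comp Primrec.snd Primrec.fst) Primrec.fst)

theorem primrec_gcd : Primrec₂ Nat.gcd := by
  have h : Primrec (fun p : ℕ × ℕ => (gstep^[p.1] (p.1, p.2)).2) :=
    Primrec.snd.comp (Primrec.nat_iterate Primrec.fst (Primrec.pair Primrec.fst Primrec.snd)
      (primrec_gstep.comp Primrec.snd).to₂)
  exact h.of_eq fun p => gstep_iter p.1 p.1 p.2 le_rfl

theorem primrec_pow : Primrec₂ (· ^ · : ℕ → ℕ → ℕ) := Primrec₂.unpaired'.1 Nat.Primrec.pow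

/-! ### structural codes -/

/-- Structural code of a rational: `Nat.pair (encode q.num) q.den`. -/
def encS (q : ℚ) : ℕ := Nat.pair (Encodable.encode q.num) q.den

/-- Valid structural codes. -/
def SP (y : ℕ) : Prop := 0 < y.unpair.2 ∧ Nat.gcd ((y.unpair.1 + 1) / 2) y.unpair.2 = 1

instance : DecidablePred SP := fun _ => instDecidableAnd

theorem encInt_ofNat (k : ℕ) : Encodable.encode (Int.ofNat k) = 2 * k := rfl
theorem encInt_negSucc (k : ℕ) : Encodable.encode (Int.negSucc k) = 2 * k + 1 := rfl

theorem encInt_abs (z : ℤ) : (Encodable.encode z + 1) / 2 = z.natAbs := by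
  cases z with
  | ofNat k => rw [encInt_ofNat]; show _ = k; omega
  | negSucc k => rw [encInt_negSucc]; show _ = k + 1; omega

theorem encInt_parity (z : ℤ) : Encodable.encode z % 2 = 1 ↔ z < 0 := by
  cases z with
  | ofNat k =>
    rw [encInt_ofNat, Int.ofNat_eq_natCast]
    omega
  | negSucc k =>
    rw [encInt_negSucc, Int.negSucc_eq]
    omega

/-- Decode of an integer code. -/
def decZ (u : ℕ) : ℤ := if u % 2 = 0 then ((u / 2 : ℕ) : ℤ) else Int.negSucc (u / 2)

theorem encInt_decZ (u : ℕ) : Encodable.encode (decZ u) = u := by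
  unfold decZ
  split_ifs with h
  · rw [show ((u / 2 : ℕ) : ℤ) = Int.ofNat (u / 2) from rfl, encInt_ofNat]; omega
  · rw [encInt_negSucc]; omega

theorem decZ_natAbs (u : ℕ) : (decZ u).natAbs = (u + 1) / 2 := by
  unfold decZ
  split_ifs with h
  · rw [Int.natAbs_natCast]; omega
  · show u / 2 + 1 = _; omega

theorem encS_eq (q : ℚ) : @Encodable.encode ℚ Rat.instEncodable q = encS q := by
  rw [show (@Encodable.encode ℚ Rat.instEncodable q : ℕ) = Encodable.encode
    ((⟨q.num, q.den, q.pos, q.reduced⟩ : Σ n : ℤ, {d : ℕ // 0 < d ∧ n.natAbs.Coprime d})) from rfl]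
  rw [Encodable.encode_sigma_val, Encodable.Subtype.encode_eq]
  rfl

theorem SP_iff (y : ℕ) : SP y ↔ y ∈ Set.range (@Encodable.encode ℚ Rat.instEncodable) := by
  constructor
  · rintro ⟨h1, h2⟩
    refine ⟨Rat.mk' (decZ y.unpair.1) y.unpair.2 (by omega)
      (by unfold Nat.Coprime; rw [decZ_natAbs]; exact h2), ?_⟩
    rw [encS_eq]
    show Nat.pair (Encodable.encode (decZ y.unpair.1)) y.unpair.2 = y
    rw [encInt_decZ, Nat.pair_unpair]
  · rintro ⟨q, rfl⟩
    rw [encS_eq]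
    unfold encS SP
    rw [Nat.unpair_pair]
    refine ⟨q.pos, ?_⟩
    rw [encInt_abs]
    exact q.reduced


theorem encInt_eq (z : ℤ) :
    Encodable.encode z = if z < 0 then 2 * z.natAbs - 1 else 2 * z.natAbs := by
  cases z with
  | ofNat k =>
    rw [if_neg (by rw [Int.ofNat_eq_natCast]; omega)]
    rfl
  | negSucc k =>
    rw [if_pos (by rw [Int.negSucc_eq]; omega)]
    show 2 * k + 1 = _
    rw [show (Int.negSucc k).natAbs = k + 1 from rfl]
    omega

/-- code-level implementation of `q ↦ q - 2^{-n}`. -/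
def F (x n : ℕ) : ℕ :=
  let u := x.unpair.1
  let d := x.unpair.2
  let t := ((u + 1) / 2) * 2 ^ n
  let B := d * 2 ^ n
  let w := if u % 2 = 1 then t + d else (if d ≤ t then t - d else d - t)
  let g := Nat.gcd w B
  Nat.pair (if u % 2 = 1 ∨ t < d then 2 * (w / g) - 1 else 2 * (w / g)) (B / g)

theorem primrec_F : Primrec₂ F := by
  have pu : Primrec (fun p : ℕ × ℕ => p.1.unpair.1) :=
    Primrec.fst.comp (Primrec.unpair.comp Primrec.fst)
  have pd : Primrec (fun p : ℕ × ℕ => p.1.unpair.2) :=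
    Primrec.snd.comp (Primrec.unpair.comp Primrec.fst)
  have pe : Primrec (fun p : ℕ × ℕ => 2 ^ p.2) :=
    primrec_pow.comp (Primrec.const 2) Primrec.snd
  have pt : Primrec (fun p : ℕ × ℕ => ((p.1.unpair.1 + 1) / 2) * 2 ^ p.2) :=
    Primrec.nat_mul.comp
      (Primrec.nat_div.comp (Primrec.nat_add.comp pu (Primrec.const 1)) (Primrec.const 2)) pe
  have pB : Primrec (fun p : ℕ × ℕ => p.1.unpair.2 * 2 ^ p.2) := Primrec.nat_mul.comp pd pe
  have codd : PrimrecPred (fun p : ℕ × ℕ => p.1.unpair.1 % 2 = 1) :=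
    Primrec.eq.comp (Primrec.nat_mod.comp pu (Primrec.const 2)) (Primrec.const 1)
  have pw : Primrec (fun p : ℕ × ℕ =>
      if p.1.unpair.1 % 2 = 1 then ((p.1.unpair.1 + 1) / 2) * 2 ^ p.2 + p.1.unpair.2
      else (if p.1.unpair.2 ≤ ((p.1.unpair.1 + 1) / 2) * 2 ^ p.2
        then ((p.1.unpair.1 + 1) / 2) * 2 ^ p.2 - p.1.unpair.2
        else p.1.unpair.2 - ((p.1.unpair.1 + 1) / 2) * 2 ^ p.2)) :=
    Primrec.ite codd (Primrec.nat_add.comp pt pd)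
      (Primrec.ite (Primrec.nat_le.comp pd pt) (Primrec.nat_sub.comp pt pd)
        (Primrec.nat_sub.comp pd pt))
  have pg : Primrec (fun p : ℕ × ℕ => Nat.gcd
      (if p.1.unpair.1 % 2 = 1 then ((p.1.unpair.1 + 1) / 2) * 2 ^ p.2 + p.1.unpair.2
      else (if p.1.unpair.2 ≤ ((p.1.unpair.1 + 1) / 2) * 2 ^ p.2
        then ((p.1.unpair.1 + 1) / 2) * 2 ^ p.2 - p.1.unpair.2
        else p.1.unpair.2 - ((p.1.unpair.1 + 1) / 2) * 2 ^ p.2))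
      (p.1.unpair.2 * 2 ^ p.2)) := primrec_gcd.comp pw pB
  have pq : Primrec (fun p : ℕ × ℕ =>
      2 * ((if p.1.unpair.1 % 2 = 1 then ((p.1.unpair.1 + 1) / 2) * 2 ^ p.2 + p.1.unpair.2
      else (if p.1.unpair.2 ≤ ((p.1.unpair.1 + 1) / 2) * 2 ^ p.2
        then ((p.1.unpair.1 + 1) / 2) * 2 ^ p.2 - p.1.unpair.2
        else p.1.unpair.2 - ((p.1.unpair.1 + 1) / 2) * 2 ^ p.2)) /
      Nat.gcd
      (if p.1.unpair.1 % 2 = 1 then ((p.1.unpair.1 + 1) / 2) * 2 ^ p.2 + p.1.unpair.2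
      else (if p.1.unpair.2 ≤ ((p.1.unpair.1 + 1) / 2) * 2 ^ p.2
        then ((p.1.unpair.1 + 1) / 2) * 2 ^ p.2 - p.1.unpair.2
        else p.1.unpair.2 - ((p.1.unpair.1 + 1) / 2) * 2 ^ p.2))
      (p.1.unpair.2 * 2 ^ p.2))) :=
    Primrec.nat_mul.comp (Primrec.const 2) (Primrec.nat_div.comp pw pg)
  have pnum := Primrec.ite (PrimrecPred.or codd (Primrec.nat_lt.comp pt pd))
      (Primrec.nat_sub.comp pq (Primrec.const 1)) pq
  have pden := Primrec.nat_div.comp pB pg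
  have : Primrec₂ F := Primrec.of_eq (Primrec₂.natPair.comp pnum pden) fun p => rfl
  exact this

theorem F_correct (q : ℚ) (n : ℕ) : F (encS q) n = encS (q - (1/2 : ℚ) ^ n) := by
  set r := q - (1/2 : ℚ) ^ n with hr
  set e : ℕ := 2 ^ n with he
  have he0 : 0 < e := Nat.pow_pos (by norm_num)
  set A : ℤ := q.num * (e : ℤ) - q.den with hA
  set B : ℕ := q.den * e with hB
  have hdpos : 0 < q.den := q.pos
  have hd0 : (q.den : ℚ) ≠ 0 := by exact_mod_cast q.den_nz
  have hB0 : B ≠ 0 := by positivity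
  have hrm : r = mkRat A B := by
    rw [Rat.mkRat_eq_div, hr, hA, hB, he]
    conv_lhs => rw [← Rat.num_div_den q]
    push_cast
    field_simp
    have h2 : ((1:ℚ)/2)^n * 2^n = 1 := by rw [← mul_pow]; norm_num
    linear_combination (-(q.den:ℚ)) * h2
  have hnorm : r = Rat.normalize A B hB0 := by rw [Rat.normalize_eq_mkRat]; exact hrm
  set g : ℕ := A.natAbs.gcd B with hg
  have hrnum : r.num = A / (g : ℤ) := by rw [hnorm, Rat.normalize_eq]
  have hrden : r.den = B / g := by rw [hnorm, Rat.normalize_eq]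
  have hg0 : 0 < g := Nat.gcd_pos_of_pos_right _ (Nat.pos_of_ne_zero hB0)
  have hdvdA : (g : ℤ) ∣ A := Int.dvd_natAbs.1 (Int.natCast_dvd_natCast.2 (Nat.gcd_dvd_left _ _))
  have hAg : A = (g : ℤ) * r.num := by rw [hrnum, Int.mul_ediv_cancel' hdvdA]
  -- |A| / g = |r.num| ; sign A = sign r.num
  have habs : A.natAbs / g = r.num.natAbs := by
    rw [hAg, Int.natAbs_mul, Int.natAbs_natCast, Nat.mul_div_cancel_left _ hg0]
  have hsign : A < 0 ↔ r.num < 0 := by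
    rw [hAg]
    constructor
    · intro h
      by_contra hc
      push_neg at hc
      nlinarith [Int.natCast_pos.2 hg0]
    · intro h
      have : (0:ℤ) < g := Int.natCast_pos.2 hg0
      exact mul_neg_of_pos_of_neg this h
  -- now unfold F
  show F (Nat.pair (Encodable.encode q.num) q.den) n = Nat.pair (Encodable.encode r.num) r.den
  unfold F
  simp only [Nat.unpair_pair, encInt_abs, encInt_parity, ← he]
  -- identify w with A.natAbs and the condition with A < 0
  have hw : (if q.num < 0 then q.num.natAbs * e + q.den
      else if q.den ≤ q.num.natAbs * e then q.num.natAbs * e - q.den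
      else q.den - q.num.natAbs * e) = A.natAbs := by
    rcases Int.lt_or_le q.num 0 with hneg | hpos
    · rw [if_pos hneg]
      have hs : ((q.num.natAbs : ℤ)) = -q.num := Int.ofNat_natAbs_of_nonpos (le_of_lt hneg)
      have h1 : (q.num : ℤ) * e = -((q.num.natAbs * e : ℕ) : ℤ) := by
        rw [Nat.cast_mul, hs]; ring
      have h2 : A = -((q.num.natAbs * e + q.den : ℕ) : ℤ) := by
        rw [hA, h1]; push_cast; ring
      rw [h2, Int.natAbs_neg, Int.natAbs_natCast]
    · rw [if_neg (by omega)]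
      have hs : ((q.num.natAbs : ℤ)) = q.num := Int.natAbs_of_nonneg hpos
      have h1 : (q.num : ℤ) * e = ((q.num.natAbs * e : ℕ) : ℤ) := by
        rw [Nat.cast_mul, hs]
      have hAe : A = ((q.num.natAbs * e : ℕ) : ℤ) - ((q.den : ℕ) : ℤ) := by
        rw [hA, h1]
      rcases le_or_gt q.den (q.num.natAbs * e) with hle | hlt
      · rw [if_pos hle]
        omega
      · rw [if_neg (by omega)]
        omega
  have hcond : (q.num < 0 ∨ q.num.natAbs * e < q.den) ↔ A < 0 := by
    rcases Int.lt_or_le q.num 0 with hneg | hpos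
    · simp only [hneg, true_or, true_iff]
      have h1 : (q.num : ℤ) * e ≤ -e := by
        have : q.num ≤ -1 := by omega
        calc (q.num : ℤ) * e ≤ (-1) * e := by
              apply mul_le_mul_of_nonneg_right this (by positivity)
        _ = -e := by ring
      rw [hA]
      have h2 : (0:ℤ) < e := by exact_mod_cast he0
      omega
    · have hs : ((q.num.natAbs : ℤ)) = q.num := Int.natAbs_of_nonneg hpos
      have h1 : (q.num : ℤ) * e = ((q.num.natAbs * e : ℕ) : ℤ) := by
        rw [Nat.cast_mul, hs]
      rw [hA, h1]
      constructor
      · rintro (h | h)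
        · omega
        · omega
      · intro h
        right
        omega
  rw [hw]
  simp only [hcond, ← hg, ← hB]
  congr 1
  · rw [habs, encInt_eq r.num]
    simp only [hsign]
  · rw [hrden]


noncomputable abbrev S : Set ℕ := Set.range (@Encodable.encode ℚ Rat.instEncodable)
noncomputable instance : DecidablePred (· ∈ S) := decidableRangeEncode ℚ
instance : Infinite S := Infinite.of_injective _ (Equiv.ofInjective _ encode_injective).injective

set_option maxRecDepth 10000 in
theorem ofNatQ (n : ℕ) :
    Denumerable.ofNat ℚ n = (equivRangeEncode ℚ).symm (Nat.Subtype.ofNat S n) :=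
  Denumerable.ofNat_of_decode rfl

/-- canonical (rank-based) encoding of ℚ -/
noncomputable abbrev enc0 : ℚ → ℕ := @Encodable.encode ℚ (@Primcodable.toEncodable ℚ inferInstance)

theorem r2s_succ' : True := trivial

theorem computable_enc0 : Computable enc0 := Computable.encode

theorem ofNat_enc0 (q : ℚ) : Denumerable.ofNat ℚ (enc0 q) = q := Denumerable.ofNat_encode q

/-- SP existence facts -/
theorem SP_zero : SP (Nat.pair 0 1) := by
  unfold SP; rw [Nat.unpair_pair]; exact ⟨one_pos, by norm_num⟩

theorem le_pair_left (a b : ℕ) : a ≤ Nat.pair a b := by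
  unfold Nat.pair
  split_ifs
  · exact Nat.le_add_left a (b * b)
  · nlinarith

theorem SP_above (x : ℕ) : ∃ y, x < y ∧ SP y := by
  refine ⟨Nat.pair (2 * (x + 1)) 1, ?_, ?_⟩
  · calc x < 2 * (x + 1) := by omega
      _ ≤ _ := le_pair_left _ _
  · unfold SP; rw [Nat.unpair_pair]; exact ⟨one_pos, Nat.gcd_one_right _⟩

theorem SP_ex : ∃ y, SP y := ⟨_, SP_zero⟩

noncomputable def first : ℕ := Nat.find SP_ex
noncomputable def next (x : ℕ) : ℕ := Nat.find (SP_above x)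
noncomputable def r2s (m : ℕ) : ℕ := next^[m] first

theorem r2s_succ (k : ℕ) : r2s (k + 1) = next (r2s k) :=
  Function.iterate_succ_apply' next k first

theorem lt_next (x : ℕ) : x < next x := (Nat.find_spec (SP_above x)).1
theorem SP_next (x : ℕ) : SP (next x) := (Nat.find_spec (SP_above x)).2
theorem next_min {x y : ℕ} (h1 : x < y) (h2 : SP y) : next x ≤ y :=
  Nat.find_min' _ ⟨h1, h2⟩
theorem SP_first : SP first := Nat.find_spec SP_ex
theorem first_min {y : ℕ} (h : SP y) : first ≤ y := Nat.find_min' _ h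

theorem r2s_strictMono : StrictMono r2s := by
  apply strictMono_nat_of_lt_succ
  intro n
  rw [r2s_succ]
  exact lt_next _

theorem r2s_mem (m : ℕ) : SP (r2s m) := by
  cases m with
  | zero => exact SP_first
  | succ k => rw [r2s_succ]; exact SP_next _

theorem r2s_surj : ∀ x, SP x → ∃ m, r2s m = x := by
  intro x
  induction x using Nat.strong_induction_on with
  | _ x ih =>
    intro hx
    by_cases hbelow : ∃ y, y < x ∧ SP y
    · -- take the largest such y
      obtain ⟨y, hy, hySP, hymax⟩ : ∃ y, y < x ∧ SP y ∧ ∀ z, y < z → z < x → ¬ SP z := by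
        obtain ⟨y, hy⟩ := hbelow
        -- find the maximum via Nat.findGreatest
        refine ⟨Nat.findGreatest (fun z => SP z) (x-1), ?_, ?_, ?_⟩
        · have := Nat.findGreatest_le (P := fun z => SP z) (x-1)
          omega
        · exact Nat.findGreatest_spec (m := y) (by omega) hy.2
        · intro z hz1 hz2 hz3
          exact Nat.findGreatest_is_greatest hz1 (by omega) hz3
      obtain ⟨m, hm⟩ := ih y hy hySP
      refine ⟨m + 1, ?_⟩
      rw [r2s_succ, hm]
      -- next y = x
      have h1 : next y ≤ x := next_min hy hx
      have h2 : ¬ (next y < x) := fun hc => hymax _ (lt_next y) hc (SP_next y)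
      omega
    · refine ⟨0, ?_⟩
      push_neg at hbelow
      have h1 : first ≤ x := first_min hx
      have h2 : ¬ (first < x) := fun hc => hbelow first hc SP_first
      show first = x
      omega

theorem r2s_eq (m : ℕ) : r2s m = (Nat.Subtype.ofNat S m : ℕ) := by
  have hrsQ_mono : StrictMono (fun m => (Nat.Subtype.ofNat S m : ℕ)) := by
    apply strictMono_nat_of_lt_succ
    intro n
    exact Nat.Subtype.lt_succ_self _
  have hr : Set.range r2s = Set.range (fun m => (Nat.Subtype.ofNat S m : ℕ)) := by
    have h2 : Set.range (fun m => (Nat.Subtype.ofNat S m : ℕ)) = S :=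
      Nat.Subtype.coe_comp_ofNat_range
    rw [h2]
    ext x
    constructor
    · rintro ⟨m, rfl⟩
      exact (SP_iff _).1 (r2s_mem m)
    · intro hx
      obtain ⟨m, hm⟩ := r2s_surj x ((SP_iff _).2 hx)
      exact ⟨m, hm⟩
  have := (StrictMono.range_inj r2s_strictMono hrsQ_mono).1 hr
  exact congrFun this m

/-- The key bridge identity. -/
theorem r2s_enc0 (q : ℚ) : r2s (enc0 q) = @Encodable.encode ℚ Rat.instEncodable q := by
  rw [r2s_eq]
  have h1 : Denumerable.ofNat ℚ (enc0 q) = (equivRangeEncode ℚ).symm (Nat.Subtype.ofNat S (enc0 q)) :=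
    ofNatQ _
  rw [ofNat_enc0] at h1
  have h2 : Nat.Subtype.ofNat S (enc0 q) = equivRangeEncode ℚ q :=
    (Equiv.symm_apply_eq _).1 h1.symm
  rw [h2]
  rfl

theorem r2s_enc0' (q : ℚ) : r2s (enc0 q) = encS q :=
  (r2s_enc0 q).trans (encS_eq q)

/-! ### computability of r2s -/

theorem primrec_SP : PrimrecPred SP := by
  have h1 : PrimrecPred (fun y : ℕ => 0 < y.unpair.2) :=
    Primrec.nat_lt.comp (Primrec.const 0) (Primrec.snd.comp Primrec.unpair)
  have h2 : PrimrecPred (fun y : ℕ => Nat.gcd ((y.unpair.1 + 1) / 2) y.unpair.2 = 1) :=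
    Primrec.eq.comp
      (primrec_gcd.comp
        (Primrec.nat_div.comp
          (Primrec.nat_add.comp (Primrec.fst.comp Primrec.unpair) (Primrec.const 1))
          (Primrec.const 2))
        (Primrec.snd.comp Primrec.unpair))
      (Primrec.const 1)
  exact (h1.and h2).of_eq fun y => Iff.rfl

theorem computable_next : Computable next := by
  have c1 : Computable₂ (fun (x k : ℕ) => decide (x < k ∧ SP k)) :=
    ((Primrec.nat_lt.comp Primrec.fst Primrec.snd).and (primrec_SP.comp Primrec.snd)).decide.to_comp
  have hpart : Partrec (fun x => Nat.rfind (fun k => (decide (x < k ∧ SP k) : Part Bool))) :=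
    Partrec.rfind c1.partrec₂
  apply Partrec.of_eq_tot hpart
  intro x
  apply Nat.mem_rfind.2
  constructor
  · exact Part.mem_some_iff.2 (decide_eq_true ⟨lt_next x, SP_next x⟩).symm
  · intro m hm
    exact Part.mem_some_iff.2 (decide_eq_false (Nat.find_min (SP_above x) hm)).symm

theorem computable_r2s : Computable r2s := by
  have hc : Computable (fun m : ℕ => Nat.rec (motive := fun _ => ℕ) first (fun _ IH => next IH) m) :=
    Computable.nat_rec Computable.id (Computable.const first)
      (computable_next.comp (Computable.snd.comp Computable.snd)).to₂
  apply hc.of_eq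
  intro m
  induction m with
  | zero => rfl
  | succ k ih =>
    show next (Nat.rec (motive := fun _ => ℕ) first (fun _ IH => next IH) k) = r2s (k + 1)
    rw [ih, r2s_succ]


/-- Main computability lemma: the shifted sequence is computable. -/
theorem computable_shift {a : ℕ → ℚ} (ha : Computable a) :
    Computable (fun n => a n - (1/2 : ℚ) ^ n) := by
  have h1 : Computable (fun n => F (r2s (enc0 (a n))) n) :=
    primrec_F.to_comp.comp (computable_r2s.comp (computable_enc0.comp ha)) Computable.id
  have c2 : Computable₂ (fun (n m : ℕ) => decide (r2s m = F (r2s (enc0 (a n))) n)) :=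
    (Primrec.eq (α := ℕ)).decide.to_comp.comp (computable_r2s.comp Computable.snd) (h1.comp Computable.fst)
  have hfind : Partrec (fun n => Nat.rfind
      (fun m => (decide (r2s m = F (r2s (enc0 (a n))) n) : Part Bool))) :=
    Partrec.rfind c2.partrec₂
  have hP : Partrec (fun n => (Nat.rfind
      (fun m => (decide (r2s m = F (r2s (enc0 (a n))) n) : Part Bool))).map
      (fun m => Denumerable.ofNat ℚ m)) :=
    hfind.map ((Computable.ofNat ℚ).comp Computable.snd).to₂
  apply Partrec.of_eq_tot hP
  intro n
  set y : ℚ := a n - (1/2 : ℚ) ^ n with hy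
  have hkey : r2s (enc0 y) = F (r2s (enc0 (a n))) n := by
    rw [r2s_enc0', r2s_enc0', F_correct]
  have hM : (enc0 y) ∈ Nat.rfind
      (fun m => (decide (r2s m = F (r2s (enc0 (a n))) n) : Part Bool)) := by
    apply Nat.mem_rfind.2
    constructor
    · exact Part.mem_some_iff.2 (decide_eq_true hkey).symm
    · intro m hm
      apply Part.mem_some_iff.2
      apply (decide_eq_false _).symm
      intro hc
      have : m = enc0 y := r2s_strictMono.injective (hc.trans hkey.symm)
      omega
  have h3 : Denumerable.ofNat ℚ (enc0 y) ∈ (Nat.rfind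
      (fun m => (decide (r2s m = F (r2s (enc0 (a n))) n) : Part Bool))).map
      (fun m => Denumerable.ofNat ℚ m) := Part.mem_map _ hM
  rwa [ofNat_enc0] at h3

/-! ### The analytic part -/

theorem main (x : ℝ) (a : ℕ → ℚ) (ha : Computable a) (hmono : Monotone a)
    (hlim : Tendsto (fun n => (a n : ℝ)) atTop (nhds x))
    (hfreq : ∃ᶠ n in atTop, x - (a n : ℝ) < (2:ℝ) ^ (-(n:ℤ))) :
    Computable (fun n => a n - (1/2 : ℚ) ^ n) ∧
    StrictMono (fun n => a n - (1/2 : ℚ) ^ n) ∧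
    Tendsto (fun n => ((a n - (1/2 : ℚ) ^ n : ℚ) : ℝ)) atTop (nhds x) ∧
    (∃ᶠ n in atTop,
        (1/4 : ℝ) <
          (((a (n+1) - (1/2 : ℚ) ^ (n+1) : ℚ) : ℝ) - ((a n - (1/2 : ℚ) ^ n : ℚ) : ℝ)) /
            (x - ((a n - (1/2 : ℚ) ^ n : ℚ) : ℝ))) ∧
    (∃ᶠ n in atTop,
        (x - ((a (n+1) - (1/2 : ℚ) ^ (n+1) : ℚ) : ℝ)) / (x - ((a n - (1/2 : ℚ) ^ n : ℚ) : ℝ))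
          ≤ (3/4 : ℝ)) := by
  have hxge : ∀ n, (a n : ℝ) ≤ x := by
    intro n
    apply ge_of_tendsto hlim
    filter_upwards [eventually_ge_atTop n] with m hm
    exact_mod_cast hmono hm
  -- real-valued shifted sequence
  have hcast : ∀ n : ℕ, ((a n - (1/2 : ℚ) ^ n : ℚ) : ℝ) = (a n : ℝ) - (1/2 : ℝ) ^ n := by
    intro n; push_cast; ring
  have hjump : ∀ n : ℕ, ((a (n+1) - (1/2 : ℚ) ^ (n+1) : ℚ) : ℝ) - ((a n - (1/2 : ℚ) ^ n : ℚ) : ℝ)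
      ≥ (1/2 : ℝ) ^ (n+1) := by
    intro n
    rw [hcast, hcast]
    have h1 : (a n : ℝ) ≤ a (n+1) := by exact_mod_cast hmono (Nat.le_succ n)
    have h2 : (1/2 : ℝ) ^ n = 2 * (1/2 : ℝ) ^ (n+1) := by ring
    nlinarith [pow_pos (by norm_num : (0:ℝ) < 1/2) (n+1)]
  have hden_pos : ∀ n : ℕ, (1/2 : ℝ) ^ n ≤ x - ((a n - (1/2 : ℚ) ^ n : ℚ) : ℝ) := by
    intro n
    rw [hcast]
    have := hxge n
    linarith
  have hpow : ∀ n : ℕ, (2:ℝ) ^ (-(n:ℤ)) = (1/2 : ℝ) ^ n := by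
    intro n
    rw [one_div, inv_pow, ← zpow_natCast (2:ℝ) n, ← zpow_neg]
  refine ⟨computable_shift ha, ?_, ?_, ?_, ?_⟩
  · apply strictMono_nat_of_lt_succ
    intro n
    have := hjump n
    have h1 : ((a (n+1) - (1/2 : ℚ) ^ (n+1) : ℚ) : ℝ) > ((a n - (1/2 : ℚ) ^ n : ℚ) : ℝ) := by
      nlinarith [pow_pos (by norm_num : (0:ℝ) < 1/2) (n+1)]
    exact_mod_cast h1
  · have : Tendsto (fun n : ℕ => (a n : ℝ) - (1/2 : ℝ) ^ n) atTop (nhds (x - 0)) :=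
      hlim.sub (tendsto_pow_atTop_nhds_zero_of_lt_one (by norm_num) (by norm_num))
    rw [sub_zero] at this
    apply this.congr
    intro n
    rw [hcast]
  · -- frequently, ratio > 1/4
    apply hfreq.mono
    intro n hn
    rw [hpow] at hn
    set D := x - ((a n - (1/2 : ℚ) ^ n : ℚ) : ℝ) with hD
    have hD1 : D < 2 * (1/2 : ℝ) ^ n := by
      rw [hD, hcast]
      linarith
    have hD0 : 0 < D := lt_of_lt_of_le (pow_pos (by norm_num) n) (hden_pos n)
    rw [lt_div_iff₀ hD0]
    have h2 : (1/2 : ℝ) ^ n = 2 * (1/2 : ℝ) ^ (n+1) := by ring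
    have := hjump n
    nlinarith
  · apply hfreq.mono
    intro n hn
    rw [hpow] at hn
    set D := x - ((a n - (1/2 : ℚ) ^ n : ℚ) : ℝ) with hD
    have hD1 : D < 2 * (1/2 : ℝ) ^ n := by
      rw [hD, hcast]
      linarith
    have hD0 : 0 < D := lt_of_lt_of_le (pow_pos (by norm_num) n) (hden_pos n)
    rw [div_le_iff₀ hD0]
    have h2 : (1/2 : ℝ) ^ n = 2 * (1/2 : ℝ) ^ (n+1) := by ring
    have := hjump n
    nlinarith


end RegSpeed


/-- A real number is computable if some computable sequence of rationals
approximates it with error below `2^(-n)` at each `n`. -/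
def ComputableReal (x : ℝ) : Prop :=
  ∃ a : ℕ → ℚ, Computable a ∧ ∀ n : ℕ, |x - (a n : ℝ)| < (2:ℝ) ^ (-(n:ℤ))

/-- A real number is left-computable if some computable non-decreasing
sequence of rationals converges to it. -/
def LeftComputable (x : ℝ) : Prop :=
  ∃ a : ℕ → ℚ, Computable a ∧ Monotone a ∧
    Tendsto (fun n => (a n : ℝ)) atTop (nhds x)

/-- Regainingly approximable real numbers. -/
def RegaininglyApproximable (x : ℝ) : Prop :=
  ∃ a : ℕ → ℚ, Computable a ∧ Monotone a ∧
    Tendsto (fun n => (a n : ℝ)) atTop (nhds x) ∧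
    ∃ᶠ n in atTop, x - (a n : ℝ) < (2:ℝ) ^ (-(n:ℤ))

/-- Nearly computable real numbers. -/
def NearlyComputable (x : ℝ) : Prop :=
  ∃ a : ℕ → ℚ, Computable a ∧ Tendsto (fun n => (a n : ℝ)) atTop (nhds x) ∧
    ∀ s : ℕ → ℕ, Computable s → StrictMono s →
      ∃ m : ℕ → ℕ, Computable m ∧
        ∀ n : ℕ, ∀ k, m n ≤ k → |(a (s (k+1)) : ℝ) - (a (s k) : ℝ)| < (2:ℝ) ^ (-(n:ℤ))

/-- Speedable real numbers. -/
def Speedable (x : ℝ) : Prop :=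
  ∃ ρ : ℝ, 0 < ρ ∧ ρ < 1 ∧
    ∃ a : ℕ → ℚ, Computable a ∧ StrictMono a ∧
      Tendsto (fun n => (a n : ℝ)) atTop (nhds x) ∧
      ∃ᶠ n in atTop, (x - (a (n+1) : ℝ)) / (x - (a n : ℝ)) ≤ ρ

/-- Every regainingly approximable number is speedable; in particular the
shifted sequence `y_n := x_n - 2^(-n)` is computable, strictly increasing,
converges to `x`, and has relative jumps above `1/4` infinitely often. -/
theorem regaininglyApproximable_speedable :
    (∀ x : ℝ, RegaininglyApproximable x → Speedable x) ∧
    ∀ (x : ℝ) (a : ℕ → ℚ), Computable a → Monotone a →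
      Tendsto (fun n => (a n : ℝ)) atTop (nhds x) →
      (∃ᶠ n in atTop, x - (a n : ℝ) < (2:ℝ) ^ (-(n:ℤ))) →
      Computable (fun n => a n - (1/2 : ℚ) ^ n) ∧
      StrictMono (fun n => a n - (1/2 : ℚ) ^ n) ∧
      Tendsto (fun n => ((a n - (1/2 : ℚ) ^ n : ℚ) : ℝ)) atTop (nhds x) ∧
      ∃ᶠ n in atTop,
        (1/4 : ℝ) <
          (((a (n+1) - (1/2 : ℚ) ^ (n+1) : ℚ) : ℝ) - ((a n - (1/2 : ℚ) ^ n : ℚ) : ℝ)) /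
            (x - ((a n - (1/2 : ℚ) ^ n : ℚ) : ℝ)) := by
  constructor
  · rintro x ⟨a, ha, hmono, hlim, hfreq⟩
    obtain ⟨hc, hsm, hl, _, hsp⟩ := RegSpeed.main x a ha hmono hlim hfreq
    exact ⟨3/4, by norm_num, by norm_num, _, hc, hsm, hl, hsp⟩
  · intro x a ha hmono hlim hfreq
    obtain ⟨hc, hsm, hl, hfr, _⟩ := RegSpeed.main x a ha hmono hlim hfreq
    exact ⟨hc, hsm, hl, hfr⟩
end

section
/- A left-computable real number x is regainingly approximable if and only if there exists a computable non-decreasing sequence of rational numbers (x_n) converging to x and a computable non-decreasing unbounded function f : ℕ → ℕ with x - x_n ≤ 2^{-f(n)} for infinitely many n. -/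
open Filter

lemma computable_find {f : ℕ → ℕ} (hf : Computable f) (H : ∀ k, ∃ n, k + 2 ≤ f n) :
    Computable (fun k => Nat.find (H k)) := by
  have hp : Computable (fun p : ℕ × ℕ => decide (p.1 + 2 ≤ f p.2)) := by
    have h1 : Computable (fun p : ℕ × ℕ => p.1 + 2) :=
      (Primrec.nat_add.comp Primrec.fst (Primrec.const 2)).to_comp
    have h2 : Computable (fun p : ℕ × ℕ => f p.2) := hf.comp Computable.snd
    exact Primrec.nat_le.decide.to_comp.comp h1 h2
  have hr : Partrec fun k => Nat.rfind fun n => Part.some (decide (k + 2 ≤ f n)) :=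
    Partrec.rfind (hp.partrec)
  apply hr.of_eq_tot
  intro k
  refine Nat.mem_rfind.2 ⟨?_, fun {m} hm => ?_⟩
  · simp [Nat.find_spec (H k)]
  · simp [Nat.find_min (H k) hm]

/-- A left-computable number is regainingly approximable iff there is a
computable non-decreasing rational approximation and a computable
non-decreasing unbounded function `f` with `x - x_n ≤ 2^(-f n)`
infinitely often. -/
theorem regaininglyApproximable_iff_unbounded_modulus (x : ℝ)
    (hl : LeftComputable x) :
    RegaininglyApproximable x ↔
      ∃ a : ℕ → ℚ, ∃ f : ℕ → ℕ, Computable a ∧ Monotone a ∧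
        Tendsto (fun n => (a n : ℝ)) atTop (nhds x) ∧
        Computable f ∧ Monotone f ∧ (∀ m : ℕ, ∃ n, m ≤ f n) ∧
        ∃ᶠ n in atTop, x - (a n : ℝ) ≤ (2:ℝ) ^ (-(f n : ℤ))  := by
  constructor
  · rintro ⟨a, ha, hm, ht, hf⟩
    exact ⟨a, id, ha, hm, ht, Computable.id, monotone_id, fun m => ⟨m, le_rfl⟩,
      hf.mono fun n h => le_of_lt (by simpa using h)⟩
  · rintro ⟨a, f, ha, hmono, htend, hfc, hfm, hfu, hfreq⟩
    have H : ∀ k, ∃ n, k + 2 ≤ f n := fun k => hfu (k + 2)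
    set g : ℕ → ℕ := fun k => Nat.find (H k) with hg
    have hgc : Computable g := computable_find hfc H
    have hgmono : Monotone g := fun i j hij =>
      Nat.find_mono fun n hn => by omega
    set e : ℕ → ℕ := fun k => g k - 1 with he
    have hec : Computable e :=
      ((Primrec.nat_sub.comp Primrec.id (Primrec.const 1)).to_comp).comp hgc
    have hgk_spec : ∀ k, k + 2 ≤ f (g k) := fun k => Nat.find_spec (H k)
    have hlt : ∀ {k n}, f n ≤ k + 1 → n ≤ e k := by
      intro k n hn
      have h1 : n < g k := by
        by_contra hcon
        push_neg at hcon
        have h2 := hfm hcon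
        have h3 := hgk_spec k
        omega
      simp only [he]
      omega
    have hemono : Monotone e := fun i j h => Nat.sub_le_sub_right (hgmono h) 1
    have hbmono : Monotone (fun k => a (e k)) := fun i j h => hmono (hemono h)
    have hetop : Tendsto e atTop atTop := by
      rw [tendsto_atTop]
      intro N
      filter_upwards [eventually_ge_atTop (f N)] with k hk
      have h1 : N < g k := by
        by_contra hcon
        push_neg at hcon
        have h2 := hfm hcon
        have h3 := hgk_spec k
        omega
      simp only [he]; omega
    refine ⟨fun k => a (e k), ha.comp hec, hbmono, htend.comp hetop, ?_⟩
    rw [frequently_atTop] at hfreq ⊢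
    intro K
    obtain ⟨N₀, hN₀⟩ := hfu (K + 1)
    obtain ⟨n, hn, hgood⟩ := hfreq N₀
    have hfn : K + 1 ≤ f n := le_trans hN₀ (hfm hn)
    refine ⟨f n - 1, by omega, ?_⟩
    have hne : n ≤ e (f n - 1) := hlt (by omega)
    have h1 : (a n : ℝ) ≤ a (e (f n - 1)) := by exact_mod_cast hmono hne
    have h2 : (2:ℝ) ^ (-(f n : ℤ)) < (2:ℝ) ^ (-((f n - 1 : ℕ) : ℤ)) := by
      apply zpow_lt_zpow_right₀ one_lt_two
      omega
    linarith
end
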